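/- Let R ∈ ℝ^{n×n} with R ≠ 0, and suppose there is a set S ⊆ {1, …, n} of cardinality k < n such that R e_i = 0 for every i ∈ S, where e_1, …, e_n is the standard basis of ℝⁿ. Let s be a standard basis vector maximizing ‖R e_i‖ over i ∈ {1, …, n}. Then sᵀ Rᵀ R s / (sᵀ s) ≥ ‖R‖_F² / (n − k), and hence the update R' = R − (R s sᵀ Rᵀ / (sᵀ Rᵀ R s)) R satisfies ‖R'‖_F² ≤ (1 − 1/(n − k)) ‖R‖_F². -/

import Mathlib

open Matrix MeasureTheory ProbabilityTheory Finset

/-- Euclidean norm of a vector in ℝⁿ. -/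
noncomputable def enorm' {n : ℕ} (v : Fin n → ℝ) : ℝ := Real.sqrt (∑ i, (v i) ^ 2)

/-- Frobenius norm of a real n×n matrix. -/
noncomputable def frob {n : ℕ} (A : Matrix (Fin n) (Fin n) ℝ) : ℝ :=
  Real.sqrt (∑ i, ∑ j, (A i j) ^ 2)

/-- Spectral (ℓ₂ operator) norm of a real n×n matrix. -/
noncomputable def opNorm' {n : ℕ} (A : Matrix (Fin n) (Fin n) ℝ) : ℝ :=
  ‖Matrix.toEuclideanCLM (𝕜 := ℝ) A‖

/-- The AAA update: AAA(B,J,s) = B + ((J−B) s sᵀ (J−B)ᵀ / (sᵀ(J−B)ᵀ(J−B)s)) (J−B)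
if (J−B)s ≠ 0, and B otherwise. -/
noncomputable def AAAupd {n : ℕ} (B J : Matrix (Fin n) (Fin n) ℝ) (s : Fin n → ℝ) :
    Matrix (Fin n) (Fin n) ℝ :=
  if (J - B).mulVec s = 0 then B
  else B + (((J - B).mulVec s) ⬝ᵥ ((J - B).mulVec s))⁻¹ •
      (Matrix.vecMulVec ((J - B).mulVec s) ((J - B).mulVec s) * (J - B))

/-- `s` is a standard basis vector maximizing ‖R e_i‖ over the standard basis. -/
noncomputable def IsGreedy {n : ℕ} (R : Matrix (Fin n) (Fin n) ℝ) (s : Fin n → ℝ) : Prop :=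
  ∃ i : Fin n, s = Pi.single i 1 ∧
    ∀ j : Fin n, enorm' (R.mulVec (Pi.single j 1)) ≤ enorm' (R.mulVec (Pi.single i 1))

/-- `P` is the orthogonal-projection matrix onto the subspace `V` of ℝⁿ
(symmetric, idempotent, range `V`, identity on `V`). -/
def IsOrthProj {n : ℕ} (P : Matrix (Fin n) (Fin n) ℝ) (V : Submodule ℝ (Fin n → ℝ)) : Prop :=
  P.IsSymm ∧ P * P = P ∧ (∀ v, P.mulVec v ∈ V) ∧ (∀ v ∈ V, P.mulVec v = v)

/-- Standard Gaussian measure on ℝⁿ: the n-fold product of N(0,1). -/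
noncomputable def stdGaussianPi (n : ℕ) : MeasureTheory.Measure (Fin n → ℝ) :=
  MeasureTheory.Measure.pi fun _ => ProbabilityTheory.gaussianReal 0 1

theorem stmt_11 {n : ℕ} (R : Matrix (Fin n) (Fin n) ℝ) (hR : R ≠ 0)
    (S : Finset (Fin n)) (k : ℕ) (hcard : S.card = k) (hk : k < n)
    (hSzero : ∀ i ∈ S, R.mulVec (Pi.single i 1) = 0)
    (s : Fin n → ℝ) (hs : IsGreedy R s)
    (R' : Matrix (Fin n) (Fin n) ℝ)
    (hR' : R' = R - (s ⬝ᵥ ((Rᵀ * R).mulVec s))⁻¹ •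
      (Matrix.vecMulVec (R.mulVec s) (R.mulVec s) * R)) :
    frob R ^ 2 / ((n : ℝ) - k) ≤ (s ⬝ᵥ ((Rᵀ * R).mulVec s)) / (s ⬝ᵥ s) ∧
    frob R' ^ 2 ≤ (1 - 1 / ((n : ℝ) - k)) * frob R ^ 2 := by

  obtain ⟨i, hsi, hmax⟩ := hs
  subst hsi hR' hcard
  classical
  set c : Fin n → ℝ := fun j => ∑ l, (R l j)^2 with hcdef
  have hc0 : ∀ j, 0 ≤ c j := fun j => Finset.sum_nonneg fun l _ => sq_nonneg _
  have hcol : ∀ j : Fin n, R.mulVec (Pi.single j 1) = fun l => R l j := by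
    intro j; funext l
    simp [Matrix.mulVec, dotProduct, Pi.single_apply, mul_comm]
  have henorm : ∀ j, enorm' (R.mulVec (Pi.single j 1)) = Real.sqrt (c j) := by
    intro j; rw [hcol]; rfl
  have hcj : ∀ j, c j ≤ c i := by
    intro j
    have h := hmax j
    rw [henorm, henorm] at h
    calc c j = Real.sqrt (c j) ^ 2 := (Real.sq_sqrt (hc0 j)).symm
      _ ≤ Real.sqrt (c i) ^ 2 := pow_le_pow_left₀ (Real.sqrt_nonneg _) h 2
      _ = c i := Real.sq_sqrt (hc0 i)
  have hS0 : ∀ j ∈ S, c j = 0 := by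
    intro j hj
    have h := hSzero j hj
    rw [hcol] at h
    simp only [hcdef]
    refine Finset.sum_eq_zero fun l _ => ?_
    have : R l j = 0 := congrFun h l
    simp [this]
  set M : ℝ := c i with hMdef
  have hM : 0 < M := by
    rcases lt_or_ge 0 M with h | h
    · exact h
    exfalso; apply hR; ext a b
    have hcb : c b = 0 := le_antisymm ((hcj b).trans h) (hc0 b)
    have h2 : (R a b)^2 = 0 :=
      (Finset.sum_eq_zero_iff_of_nonneg (fun l _ => sq_nonneg (R l b))).mp hcb a (Finset.mem_univ a)
    have : R a b = 0 := pow_eq_zero_iff (by norm_num : (2:ℕ) ≠ 0) |>.mp h2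
    simpa using this
  have hMne : M ≠ 0 := hM.ne'
  set F : ℝ := ∑ j, c j with hFdef
  have hfrobsq : frob R ^ 2 = F := by
    rw [frob, Real.sq_sqrt (by positivity)]
    rw [hFdef, hcdef]
    exact Finset.sum_comm
  have hnk : (0:ℝ) < (n:ℝ) - S.card := by
    have : (S.card : ℝ) < n := by exact_mod_cast hk
    linarith
  have hFbound : F ≤ ((n:ℝ) - S.card) * M := by
    have h1 : F = ∑ j ∈ Sᶜ, c j := by
      rw [hFdef, ← Finset.sum_compl_add_sum S (fun j => c j)]
      rw [Finset.sum_eq_zero hS0]; ring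
    have h2 : ∑ j ∈ Sᶜ, c j ≤ (Sᶜ.card : ℝ) * M := by
      calc ∑ j ∈ Sᶜ, c j ≤ ∑ _j ∈ Sᶜ, M := Finset.sum_le_sum fun j _ => hcj j
      _ = (Sᶜ.card : ℝ) * M := by rw [Finset.sum_const, nsmul_eq_mul]
    have h3 : (Sᶜ.card : ℝ) = (n:ℝ) - S.card := by
      rw [Finset.card_compl]
      have := (Finset.card_le_univ S)
      simp only [Fintype.card_fin] at *
      push_cast [Nat.cast_sub this]
      ring
    rw [h1]; rw [h3] at h2; exact h2
  have hss : (Pi.single i 1 : Fin n → ℝ) ⬝ᵥ (Pi.single i 1) = 1 := by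
    simp [dotProduct, Pi.single_apply]
  set d : Fin n → ℝ := fun j => ∑ m, R m i * R m j with hddef
  have hdot : (Pi.single i 1 : Fin n → ℝ) ⬝ᵥ ((Rᵀ * R).mulVec (Pi.single i 1)) = M := by
    have : (Rᵀ * R).mulVec (Pi.single i 1) = fun l => (Rᵀ * R) l i := by
      funext l; simp [Matrix.mulVec, dotProduct, Pi.single_apply, mul_comm]
    rw [this]
    simp only [dotProduct, Pi.single_apply]
    rw [Finset.sum_eq_single i]
    · simp [Matrix.mul_apply, hMdef, hcdef, sq]
    · intro b _ hb; simp [hb]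
    · simp
  have hdi : d i = M := by
    simp [hddef, hMdef, hcdef, sq]
  -- entries of R'
  have hentry : ∀ l j, (R - ((Pi.single i 1 : Fin n → ℝ) ⬝ᵥ ((Rᵀ * R).mulVec (Pi.single i 1)))⁻¹ •
      (Matrix.vecMulVec (R.mulVec (Pi.single i 1)) (R.mulVec (Pi.single i 1)) * R)) l j
      = R l j - M⁻¹ * (R l i * d j) := by
    intro l j
    rw [hdot]
    simp only [Matrix.sub_apply, Matrix.smul_apply, smul_eq_mul]
    congr 1
    have hsum : ∑ m, Matrix.vecMulVec (R.mulVec (Pi.single i 1)) (R.mulVec (Pi.single i 1)) l m * R m j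
        = ∑ m, R l i * (R m i * R m j) := Finset.sum_congr rfl fun m _ => by
      simp only [Matrix.vecMulVec_apply, hcol]; ring
    rw [Matrix.mul_apply, hsum, ← Finset.mul_sum]
  have hkey : ∀ j, ∑ l, (R l j - M⁻¹ * (R l i * d j))^2 = c j - M⁻¹ * (d j)^2 := by
    intro j
    have hexp : ∀ l, (R l j - M⁻¹ * (R l i * d j))^2 =
        (R l j)^2 - (2 * M⁻¹ * d j) * (R l i * R l j) + (M⁻¹^2 * (d j)^2) * (R l i)^2 := by
      intro l; ring
    simp_rw [hexp]
    rw [Finset.sum_add_distrib, Finset.sum_sub_distrib, ← Finset.mul_sum, ← Finset.mul_sum]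
    have h1 : ∑ l, R l i * R l j = d j := rfl
    have h2 : ∑ l, (R l i)^2 = M := rfl
    rw [h1, h2]
    field_simp
    ring
  have hfrob' : frob (R - ((Pi.single i 1 : Fin n → ℝ) ⬝ᵥ ((Rᵀ * R).mulVec (Pi.single i 1)))⁻¹ •
      (Matrix.vecMulVec (R.mulVec (Pi.single i 1)) (R.mulVec (Pi.single i 1)) * R)) ^ 2
      = F - M⁻¹ * ∑ j, (d j)^2 := by
    rw [frob, Real.sq_sqrt (by positivity)]
    rw [Finset.sum_comm]
    calc ∑ j, ∑ l, _ = ∑ j, (c j - M⁻¹ * (d j)^2) := by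
          refine Finset.sum_congr rfl fun j _ => ?_
          rw [← hkey j]
          exact Finset.sum_congr rfl fun l _ => by rw [hentry l j]
      _ = F - M⁻¹ * ∑ j, (d j)^2 := by
          rw [Finset.sum_sub_distrib, ← Finset.mul_sum, hFdef]
  have hdsum : M^2 ≤ ∑ j, (d j)^2 := by
    have h : (d i)^2 ≤ ∑ j, (d j)^2 :=
      Finset.single_le_sum (fun j _ => sq_nonneg (d j)) (Finset.mem_univ i)
    rw [hdi] at h; exact h
  have part1 : frob R ^ 2 / ((n : ℝ) - S.card) ≤
      ((Pi.single i 1 : Fin n → ℝ) ⬝ᵥ ((Rᵀ * R).mulVec (Pi.single i 1))) /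
        ((Pi.single i 1 : Fin n → ℝ) ⬝ᵥ (Pi.single i 1)) := by
    rw [hdot, hss, hfrobsq, div_one, div_le_iff₀ hnk]
    linarith [hFbound]
  refine ⟨part1, ?_⟩
  rw [hfrob', hfrobsq]
  have h1 : F - M⁻¹ * ∑ j, (d j)^2 ≤ F - M := by
    have : M = M⁻¹ * M^2 := by field_simp [sq]
    nlinarith [inv_pos.mpr hM, hdsum]
  have h2 : F / ((n:ℝ) - S.card) ≤ M := by
    rw [div_le_iff₀ hnk]; linarith [hFbound]
  have h3 : (1 - 1 / ((n:ℝ) - S.card)) * F = F - F / ((n:ℝ) - S.card) := by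
    field_simp
  have hF0 : 0 ≤ F := Finset.sum_nonneg fun j _ => hc0 j
  rw [h3]
  have : F / ((n:ℝ) - S.card) ≤ M := h2
  linarith
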